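/- Let H be an infinite-dimensional separable Hilbert space. Then there exist an orthonormal sequence (eᵢ)ᵢ≥₁ in H and orthogonal projections F₁, F₂, … on H, each with infinite-dimensional range, such that: ê₁ ≤ F₁; Fᵢ Fᵢ₊₁ = êᵢ₊₁ for all i ≥ 1; and Fᵢ Fⱼ = 0 whenever |i − j| ≥ 2. -/

import Mathlib

/-- `P` is an orthogonal projection: idempotent and self-adjoint. -/
def IsOrthoProj {𝕜 H : Type*} [RCLike 𝕜] [NormedAddCommGroup H]
    [InnerProductSpace 𝕜 H] [CompleteSpace H] (P : H →L[𝕜] H) : Prop :=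
  P * P = P ∧ IsSelfAdjoint P

/-- The rank-one orthogonal projection `x ↦ ⟨f, x⟩ f` onto the span of a unit vector `f`. -/
noncomputable def projOnto (𝕜 : Type*) {H : Type*} [RCLike 𝕜] [NormedAddCommGroup H]
    [InnerProductSpace 𝕜 H] (f : H) : H →L[𝕜] H :=
  (innerSL 𝕜 f).smulRight f

section Aux

open Submodule

variable {𝕜 H : Type*} [RCLike 𝕜] [NormedAddCommGroup H] [InnerProductSpace 𝕜 H]
  [CompleteSpace H]

local notation "⟪" x ", " y "⟫" => @inner 𝕜 _ _ x y

lemma aux_exists_on (hH : ¬ FiniteDimensional 𝕜 H) :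
    ∃ u : ℕ ⊕ ℕ × ℕ → H, Orthonormal 𝕜 u := by
  obtain ⟨w, b, hb⟩ := exists_hilbertBasis 𝕜 H
  have horth : Orthonormal 𝕜 ((↑) : w → H) := hb ▸ b.orthonormal
  have hinf : w.Infinite := by
    intro hfin
    apply hH
    haveI : FiniteDimensional 𝕜 (span 𝕜 w) := FiniteDimensional.span_of_finite 𝕜 hfin
    have hcl : IsClosed (span 𝕜 w : Set H) := Submodule.closed_of_finiteDimensional _
    have h1 : (span 𝕜 w).topologicalClosure = ⊤ := by
      have := b.dense_span
      rwa [hb, Subtype.range_coe] at this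
    have htop : span 𝕜 w = ⊤ := by
      rw [← h1]; exact (SetLike.ext' hcl.closure_eq).symm
    haveI : FiniteDimensional 𝕜 (⊤ : Submodule 𝕜 H) := htop ▸ inferInstance
    exact Module.Finite.equiv Submodule.topEquiv
  let f := hinf.natEmbedding
  let c : ℕ ⊕ ℕ × ℕ ≃ ℕ := Denumerable.eqv _
  exact ⟨fun a => ↑(f (c a)), horth.comp (fun a => f (c a))
    (f.injective.comp c.injective)⟩

end Aux

/-- In an infinite-dimensional separable Hilbert space there are an orthonormal sequence
`(eᵢ)` and orthogonal projections `F₁, F₂, …`, each with infinite-dimensional range, with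
`ê₁ ≤ F₁`, `Fᵢ Fᵢ₊₁ = êᵢ₊₁`, and `Fᵢ Fⱼ = 0` for `|i − j| ≥ 2`.  (Indices start at `0`.) -/


theorem exists_chained_infinite_projections
    {𝕜 H : Type*} [RCLike 𝕜] [NormedAddCommGroup H] [InnerProductSpace 𝕜 H]
    [CompleteSpace H] [TopologicalSpace.SeparableSpace H]
    (hH : ¬ FiniteDimensional 𝕜 H) :
    ∃ (e : ℕ → H) (F : ℕ → (H →L[𝕜] H)),
      Orthonormal 𝕜 e ∧
      (∀ i, IsOrthoProj (F i)) ∧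
      (∀ i, ¬ FiniteDimensional 𝕜 ↥(LinearMap.range ((F i : H →L[𝕜] H) : H →ₗ[𝕜] H))) ∧
      F 0 * projOnto 𝕜 (e 0) = projOnto 𝕜 (e 0) ∧
      (∀ i, F i * F (i + 1) = projOnto 𝕜 (e (i + 1))) ∧
      (∀ i j : ℕ, 2 ≤ ((i : ℤ) - (j : ℤ)).natAbs → F i * F j = 0) := by
  classical
  obtain ⟨u, hu⟩ := aux_exists_on hH
  set e : ℕ → H := fun i => u (Sum.inl i) with he
  set g : ℕ → ℕ → H := fun i n => u (Sum.inr (i, n)) with hg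
  set T : ℕ → Set (ℕ ⊕ ℕ × ℕ) :=
    fun i => {a | a = Sum.inl i ∨ a = Sum.inl (i+1) ∨ ∃ n, a = Sum.inr (i, n)} with hT
  set S : ℕ → Set H := fun i => u '' T i with hS
  set K : ℕ → Submodule 𝕜 H := fun i => (Submodule.span 𝕜 (S i)).topologicalClosure with hK
  set F : ℕ → H →L[𝕜] H :=
    fun i => (K i).subtypeL.comp ((K i).orthogonalProjectionOnto) with hF
  -- basic membership
  have hmem : ∀ i, ∀ a ∈ T i, u a ∈ K i := fun i a ha =>
    Submodule.le_topologicalClosure _ (Submodule.subset_span ⟨a, ha, rfl⟩)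
  have happly : ∀ i x, x ∈ K i → F i x = x := by
    intro i x hx
    simp only [hF, ContinuousLinearMap.comp_apply, Submodule.subtypeL_apply]
    exact Submodule.starProjection_eq_self_iff.2 hx
  have horthog : ∀ i (v : H), (∀ a ∈ T i, @inner 𝕜 _ _ (u a) v = 0) → F i v = 0 := by
    intro i v hv
    have hvK : v ∈ (K i)ᗮ := by
      rw [Submodule.mem_orthogonal]
      intro w hw
      have hle : Submodule.span 𝕜 (S i) ≤ (𝕜 ∙ v)ᗮ := by
        rw [Submodule.span_le]
        rintro _ ⟨a, ha, rfl⟩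
        exact Submodule.mem_orthogonal_singleton_iff_inner_left.2 (hv a ha)
      have hcl := (Submodule.span 𝕜 (S i)).topologicalClosure_minimal hle
        ((𝕜 ∙ v)).isClosed_orthogonal
      exact Submodule.mem_orthogonal_singleton_iff_inner_left.1 (hcl hw)
    simp only [hF, ContinuousLinearMap.comp_apply]
    rw [Submodule.orthogonalProjectionOnto_apply_of_mem_orthogonal hvK]
    simp
  have heqOn : ∀ (A B : H →L[𝕜] H) j, (∀ a ∈ T j, A (u a) = B (u a)) →
      ∀ x ∈ K j, A x = B x := by
    intro A B j hAB x hx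
    have h1 : Set.EqOn A B (S j) := by rintro _ ⟨a, ha, rfl⟩; exact hAB a ha
    have h2 : Set.EqOn A B (Submodule.span 𝕜 (S j) : Set H) := fun y hy =>
      LinearMap.eqOn_span (f := (A : H →ₗ[𝕜] H)) (g := (B : H →ₗ[𝕜] H)) h1 hy
    have hx' : x ∈ closure (Submodule.span 𝕜 (S j) : Set H) := by
      rwa [← Submodule.topologicalClosure_coe]
    exact Set.EqOn.closure h2 A.continuous B.continuous hx'
  have hinner0 : ∀ a a', a ≠ a' → @inner 𝕜 _ _ (u a) (u a') = 0 := fun a a' h => hu.2 h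
  have hinner1 : ∀ a, @inner 𝕜 _ _ (u a) (u a) = 1 := by
    intro a
    rw [@inner_self_eq_norm_sq_to_K 𝕜, hu.1 a]
    norm_num
  have hproj : ∀ (f x : H), projOnto 𝕜 f x = @inner 𝕜 _ _ f x • f := by
    intro f x; rfl
  refine ⟨e, F, hu.comp Sum.inl Sum.inl_injective, ?_, ?_, ?_, ?_, ?_⟩
  · -- IsOrthoProj
    intro i
    constructor
    · ext x
      exact happly i (F i x) (by
        simp only [hF, ContinuousLinearMap.comp_apply, Submodule.subtypeL_apply]
        exact ((K i).orthogonalProjectionOnto x).2)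
    · exact isSelfAdjoint_starProjection (K i)
  · -- infinite rank
    intro i hfd
    have hmemr : ∀ n, g i n ∈ LinearMap.range ((F i : H →L[𝕜] H) : H →ₗ[𝕜] H) := by
      intro n
      exact ⟨g i n, happly i _ (hmem i _ (Or.inr (Or.inr ⟨n, rfl⟩)))⟩
    let v : ℕ → LinearMap.range ((F i : H →L[𝕜] H) : H →ₗ[𝕜] H) :=
      fun n => ⟨g i n, hmemr n⟩
    have hvon : Orthonormal 𝕜 v := by
      constructor
      · intro n
        exact hu.1 _
      · intro n m hnm
        rw [Submodule.coe_inner]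
        exact hu.2 (by simp [hnm])
    haveI := hfd
    exact (instInfiniteNat).not_finite hvon.linearIndependent.finite
  · -- F 0 ∘ proj = proj
    simp only [he]
    ext x
    rw [ContinuousLinearMap.mul_apply]
    simp only [hproj]
    rw [map_smul]
    congr 1
    exact happly 0 _ (hmem 0 _ (Or.inl rfl))
  · -- chain
    intro i
    have hstep : ∀ y ∈ K (i+1), F i y = projOnto 𝕜 (u (Sum.inl (i+1))) y := by
      refine heqOn _ _ (i+1) ?_
      rintro a (rfl | rfl | ⟨n, rfl⟩)
      · rw [hproj, hinner1, one_smul]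
        exact happly i _ (hmem i _ (Or.inr (Or.inl rfl)))
      · rw [hproj, hinner0 _ _ (by simp), zero_smul]
        exact horthog i _ (by
          rintro b (rfl | rfl | ⟨m, rfl⟩) <;> exact hinner0 _ _ (by simp <;> omega))
      · rw [hproj, hinner0 _ _ (by simp), zero_smul]
        exact horthog i _ (by
          rintro b (rfl | rfl | ⟨m, rfl⟩) <;> exact hinner0 _ _ (by simp <;> omega))
    simp only [he]
    ext x
    rw [ContinuousLinearMap.mul_apply]
    have hy : F (i+1) x ∈ K (i+1) := by
      simp only [hF, ContinuousLinearMap.comp_apply, Submodule.subtypeL_apply]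
      exact ((K (i+1)).orthogonalProjectionOnto x).2
    rw [hstep _ hy]
    simp only [hproj]
    congr 1
    have hsa : IsSelfAdjoint (F (i+1)) := isSelfAdjoint_starProjection (K (i+1))
    calc @inner 𝕜 _ _ (u (Sum.inl (i+1))) (F (i+1) x)
        = @inner 𝕜 _ _ (ContinuousLinearMap.adjoint (F (i+1)) (u (Sum.inl (i+1)))) x := by
          rw [ContinuousLinearMap.adjoint_inner_left]
      _ = @inner 𝕜 _ _ (u (Sum.inl (i+1))) x := by
          rw [hsa.adjoint_eq, happly (i+1) _ (hmem (i+1) _ (Or.inl rfl))]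
  · -- far apart
    intro i j hij
    ext x
    rw [ContinuousLinearMap.mul_apply, ContinuousLinearMap.zero_apply]
    have hy : F j x ∈ K j := by
      simp only [hF, ContinuousLinearMap.comp_apply, Submodule.subtypeL_apply]
      exact ((K j).orthogonalProjectionOnto x).2
    have : F i (F j x) = (0 : H →L[𝕜] H) (F j x) := by
      refine heqOn _ _ j ?_ _ hy
      intro a ha
      rw [ContinuousLinearMap.zero_apply]
      refine horthog i _ ?_
      rintro b (rfl | rfl | ⟨m, rfl⟩) <;>
        rcases ha with rfl | rfl | ⟨n, rfl⟩ <;>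
        exact hinner0 _ _ (by simp <;> omega)
    simpa using this
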